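/- arXiv:1705.04028 — 2 statements merged into one kernel-verified Lean document; each statement's English description precedes it below -/
import Mathlib

section
/- Let H be a complex Hilbert space and Θ : H → H a bounded linear operator such that Θ* is hyponormal (i.e., ‖Θf‖ ≤ ‖Θ*f‖ for all f ∈ H). Let {f_i}_{i∈I} be a Θ-frame for H with bounds A, B > 0 (I countable), let {Φ_r}_{r∈R} be a family in H (R countable), and suppose there is a bounded linear operator T : ℓ²(I) → ℓ²(R) such that T({⟨f_i, g⟩}_{i∈I}) = {⟨Φ_r, g⟩}_{r∈R} for every g ∈ H. Then {Φ_r}_{r∈R} is a Θ-frame for H if and only if there exists λ > 0 such that Σ_{r∈R} |⟨Φ_r, g⟩|² ≥ λ Σ_{i∈I} |⟨f_i, g⟩|² for all g ∈ H. -/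
open scoped ComplexInnerProductSpace

lemma lp_two_norm_sq {ι : Type*} (x : lp (fun _ : ι => ℂ) 2) :
    ‖x‖ ^ 2 = ∑' i, ‖x i‖ ^ 2 := by
  have h := lp.norm_rpow_eq_tsum (p := 2) (by norm_num) x
  simp only [ENNReal.toReal_ofNat] at h
  calc ‖x‖ ^ 2 = ‖x‖ ^ (2 : ℝ) := by
        rw [← Real.rpow_natCast]; norm_num
    _ = ∑' i, ‖x i‖ ^ (2 : ℝ) := h
    _ = ∑' i, ‖x i‖ ^ 2 := by
        congr 1; funext i; rw [← Real.rpow_natCast]; norm_num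

/-- Let `Θ*` be hyponormal, `{f_i}` a `Θ`-frame with bounds `A, B`,
`{Φ_r}` a family in `H`, and `T : ℓ²(I) → ℓ²(R)` a bounded operator with
`T({⟨f_i, g⟩}_i) = {⟨Φ_r, g⟩}_r` for every `g ∈ H`. Then `{Φ_r}` is a `Θ`-frame if and
only if there is `λ > 0` with `∑_r |⟨Φ_r, g⟩|² ≥ λ ∑_i |⟨f_i, g⟩|²` for all `g ∈ H`. -/
theorem linear_combination_theta_frame_iff
    {H : Type*} [NormedAddCommGroup H] [InnerProductSpace ℂ H] [CompleteSpace H]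
    {I R : Type*} [Countable I] [Countable R]
    (Θ : H →L[ℂ] H)
    (hhypo : ∀ g : H, ‖Θ g‖ ≤ ‖ContinuousLinearMap.adjoint Θ g‖)
    (f : I → H) (A B : ℝ) (hA : 0 < A) (hB : 0 < B)
    (hframe : ∀ g : H, A * ‖ContinuousLinearMap.adjoint Θ g‖ ^ 2 ≤ ∑' i, ‖⟪f i, g⟫‖ ^ 2 ∧
      ∑' i, ‖⟪f i, g⟫‖ ^ 2 ≤ B * ‖Θ g‖ ^ 2)
    (Φ : R → H)
    (T : lp (fun _ : I => ℂ) 2 →L[ℂ] lp (fun _ : R => ℂ) 2)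
    (hmemI : ∀ g : H, Memℓp (fun i => ⟪f i, g⟫) 2)
    (hmemR : ∀ g : H, Memℓp (fun r => ⟪Φ r, g⟫) 2)
    (hT : ∀ g : H, T ⟨fun i => ⟪f i, g⟫, hmemI g⟩ = ⟨fun r => ⟪Φ r, g⟫, hmemR g⟩) :
    (∃ A' B' : ℝ, 0 < A' ∧ 0 < B' ∧
        ∀ g : H, A' * ‖ContinuousLinearMap.adjoint Θ g‖ ^ 2 ≤ ∑' r, ‖⟪Φ r, g⟫‖ ^ 2 ∧
          ∑' r, ‖⟪Φ r, g⟫‖ ^ 2 ≤ B' * ‖Θ g‖ ^ 2) ↔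
      ∃ lam : ℝ, 0 < lam ∧
        ∀ g : H, lam * ∑' i, ‖⟪f i, g⟫‖ ^ 2 ≤ ∑' r, ‖⟪Φ r, g⟫‖ ^ 2 := by
  constructor
  · rintro ⟨A', B', hA', hB', h⟩
    refine ⟨A' / B, div_pos hA' hB, fun g => ?_⟩
    have h1 := (hframe g).2
    have h2 := (h g).1
    have h3 : B * ‖Θ g‖ ^ 2 ≤ B * ‖ContinuousLinearMap.adjoint Θ g‖ ^ 2 := by
      gcongr
      exact hhypo g
    calc A' / B * ∑' i, ‖⟪f i, g⟫‖ ^ 2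
        ≤ A' / B * (B * ‖ContinuousLinearMap.adjoint Θ g‖ ^ 2) := by
          apply mul_le_mul_of_nonneg_left (h1.trans h3)
          positivity
      _ = A' * ‖ContinuousLinearMap.adjoint Θ g‖ ^ 2 := by
          field_simp
      _ ≤ ∑' r, ‖⟪Φ r, g⟫‖ ^ 2 := h2
  · rintro ⟨lam, hlam, h⟩
    refine ⟨lam * A, (‖T‖ ^ 2 + 1) * B, by positivity, by positivity, fun g => ?_⟩
    constructor
    · calc lam * A * ‖ContinuousLinearMap.adjoint Θ g‖ ^ 2
          ≤ lam * ∑' i, ‖⟪f i, g⟫‖ ^ 2 := by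
            rw [mul_assoc]
            exact mul_le_mul_of_nonneg_left (hframe g).1 hlam.le
        _ ≤ ∑' r, ‖⟪Φ r, g⟫‖ ^ 2 := h g
    · have key : ∑' r, ‖⟪Φ r, g⟫‖ ^ 2 ≤ ‖T‖ ^ 2 * ∑' i, ‖⟪f i, g⟫‖ ^ 2 := by
        have h1 : (∑' r, ‖⟪Φ r, g⟫‖ ^ 2) =
            ‖(⟨fun r => ⟪Φ r, g⟫, hmemR g⟩ : lp (fun _ : R => ℂ) 2)‖ ^ 2 := by
          rw [lp_two_norm_sq]
        have h2 : (∑' i, ‖⟪f i, g⟫‖ ^ 2) =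
            ‖(⟨fun i => ⟪f i, g⟫, hmemI g⟩ : lp (fun _ : I => ℂ) 2)‖ ^ 2 := by
          rw [lp_two_norm_sq]
        rw [h1, h2, ← hT g, ← mul_pow]
        exact pow_le_pow_left₀ (norm_nonneg _) (T.le_opNorm _) 2
      calc ∑' r, ‖⟪Φ r, g⟫‖ ^ 2
          ≤ ‖T‖ ^ 2 * ∑' i, ‖⟪f i, g⟫‖ ^ 2 := key
        _ ≤ (‖T‖ ^ 2 + 1) * ∑' i, ‖⟪f i, g⟫‖ ^ 2 := by
            apply mul_le_mul_of_nonneg_right (by linarith)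
            calc (0:ℝ) ≤ A * ‖ContinuousLinearMap.adjoint Θ g‖ ^ 2 := by positivity
              _ ≤ _ := (hframe g).1
        _ ≤ (‖T‖ ^ 2 + 1) * (B * ‖Θ g‖ ^ 2) := by
            apply mul_le_mul_of_nonneg_left (hframe g).2
            positivity
        _ = (‖T‖ ^ 2 + 1) * B * ‖Θ g‖ ^ 2 := by ring
end

section
/- Let H be a complex Hilbert space and Θ : H → H a bounded linear operator whose range R(Θ) is closed. Let {f_i}_{i∈I} (I countable) be a Θ-frame for H with lower bound A > 0, i.e., A‖Θ*f‖² ≤ Σ_{i∈I} |⟨f, f_i⟩|² for all f ∈ H. Then there exists a constant c > 0 such that Σ_{i∈I} |⟨f, f_i⟩|² ≥ c‖f‖² for all f ∈ R(Θ); equivalently, the frame operator S, defined by Sf = Σ_{i∈I} ⟨f, f_i⟩ f_i, satisfies ⟨Sf, f⟩ ≥ c‖f‖² for all f ∈ R(Θ). -/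
open scoped ComplexInnerProductSpace

private lemma sq_div_le_sq_aux {a b C : ℝ} (hC : 0 < C) (ha : 0 ≤ a) (hb : 0 ≤ b)
    (key : a ^ 2 ≤ C * a * b) : a ^ 2 / C ^ 2 ≤ b ^ 2 := by
  rcases eq_or_lt_of_le ha with h0 | h0
  · rw [← h0]
    simpa using sq_nonneg b
  · have hle : a ≤ C * b := by nlinarith
    rw [div_le_iff₀ (by positivity)]
    nlinarith

/-- If `Θ` has closed range and `{f_i}` is a `Θ`-frame with lower bound
`A > 0` (i.e. `A‖Θ*f‖² ≤ ∑_i |⟨f, f_i⟩|²` for all `f`), then there is `c > 0` with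
`∑_i |⟨f, f_i⟩|² ≥ c‖f‖²` for all `f ∈ R(Θ)`; equivalently the frame operator `S`
satisfies `⟨Sf, f⟩ ≥ c‖f‖²` on `R(Θ)`. -/
theorem theta_frame_lower_bound_on_range
    {H : Type*} [NormedAddCommGroup H] [InnerProductSpace ℂ H] [CompleteSpace H]
    {I : Type*} [Countable I]
    (Θ : H →L[ℂ] H) (hclosed : IsClosed (Set.range ⇑Θ))
    (f : I → H) (A : ℝ) (hA : 0 < A)
    (hlow : ∀ g : H, A * ‖ContinuousLinearMap.adjoint Θ g‖ ^ 2 ≤ ∑' i, ‖⟪g, f i⟫‖ ^ 2) :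
    ∃ c : ℝ, 0 < c ∧ ∀ g ∈ Set.range ⇑Θ, c * ‖g‖ ^ 2 ≤ ∑' i, ‖⟪g, f i⟫‖ ^ 2 := by
  set K : Submodule ℂ H := LinearMap.range (Θ : H →ₗ[ℂ] H) with hK
  have hKclosed : IsClosed (K : Set H) := by
    have : (K : Set H) = Set.range ⇑Θ := by
      ext y; simp [hK, LinearMap.mem_range]
    rw [this]; exact hclosed
  haveI : CompleteSpace K := hKclosed.completeSpace_coe
  set T : H →L[ℂ] K := Θ.codRestrict K (fun x => LinearMap.mem_range_self _ x) with hT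
  have hsurj : Function.Surjective T := by
    rintro ⟨y, x, rfl⟩
    exact ⟨x, rfl⟩
  obtain ⟨C, Cpos, hC⟩ := T.exists_preimage_norm_le hsurj
  refine ⟨A / C ^ 2, by positivity, ?_⟩
  rintro g ⟨x₀, rfl⟩
  set g : H := Θ x₀
  have hgK : g ∈ K := ⟨x₀, rfl⟩
  obtain ⟨x, hx, hxn⟩ := hC ⟨g, hgK⟩
  have hx' : Θ x = g := congrArg Subtype.val hx
  have hnorm : ‖(⟨g, hgK⟩ : K)‖ = ‖g‖ := rfl
  -- key: ‖g‖² ≤ C ‖g‖ ‖Θ* g‖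
  have key : ‖g‖ ^ 2 ≤ C * ‖g‖ * ‖ContinuousLinearMap.adjoint Θ g‖ := by
    have h1 : (‖g‖ : ℝ) ^ 2 = ‖⟪Θ x, g⟫‖ := by
      rw [hx']
      simp [inner_self_eq_norm_sq_to_K]
    have h2 : ⟪Θ x, g⟫ = ⟪x, ContinuousLinearMap.adjoint Θ g⟫ := by
      rw [ContinuousLinearMap.adjoint_inner_right]
    have h3 : ‖⟪x, ContinuousLinearMap.adjoint Θ g⟫‖ ≤ ‖x‖ * ‖ContinuousLinearMap.adjoint Θ g‖ :=
      norm_inner_le_norm _ _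
    have h4 : ‖x‖ ≤ C * ‖g‖ := by simpa [hnorm] using hxn
    calc ‖g‖ ^ 2 = ‖⟪x, ContinuousLinearMap.adjoint Θ g⟫‖ := by rw [h1, h2]
      _ ≤ ‖x‖ * ‖ContinuousLinearMap.adjoint Θ g‖ := h3
      _ ≤ C * ‖g‖ * ‖ContinuousLinearMap.adjoint Θ g‖ := by
          exact mul_le_mul_of_nonneg_right h4 (norm_nonneg _)
  have key3 : ‖g‖ ^ 2 / C ^ 2 ≤ ‖ContinuousLinearMap.adjoint Θ g‖ ^ 2 :=
    sq_div_le_sq_aux Cpos (norm_nonneg _) (norm_nonneg _) key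
  calc A / C ^ 2 * ‖g‖ ^ 2 = A * (‖g‖ ^ 2 / C ^ 2) := by ring
    _ ≤ A * ‖ContinuousLinearMap.adjoint Θ g‖ ^ 2 := by
        exact mul_le_mul_of_nonneg_left key3 hA.le
    _ ≤ ∑' i, ‖⟪g, f i⟫‖ ^ 2 := hlow g
end
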